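/- If x' lies in Cone(x, B(y,l)) but outside the closed disk of radius l around y, then Cone(x', B(y,l)) is contained in Cone(x, B(y,l)). -/

import Mathlib

noncomputable section

/-- The open cone from `x` to the open disk `B(y,l)`: the region bounded by the
two tangent segments from `x` to the circle `C(y,l)` together with the disk,
i.e. the union of all segments from `x` to points of the open disk, with the
apex `x` removed. -/
def Cone (x y : EuclideanSpace ℝ (Fin 2)) (l : ℝ) : Set (EuclideanSpace ℝ (Fin 2)) :=
  {z | z ≠ x ∧ ∃ w, dist w y < l ∧ z ∈ segment ℝ x w}

/-- If `x'` lies in `Cone(x, B(y,l))` but outside the closed disk of radius `l`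
around `y`, then `Cone(x', B(y,l)) ⊆ Cone(x, B(y,l))`. -/
theorem cone_subset_cone (x y x' : EuclideanSpace ℝ (Fin 2)) (l : ℝ)
    (hl : 0 < l) (hd : l < dist x y)
    (hx' : x' ∈ Cone x y l) (hfar : l < dist x' y) :
    Cone x' y l ⊆ Cone x y l := by
  obtain ⟨hx'x, v, hv, c, s, hc, hs, hcs, hx'eq⟩ := hx'
  rintro z ⟨hzx', w, hw, a, b, ha, hb, hab, hz⟩
  have hs0 : 0 < s := by
    rcases hs.lt_or_eq with h | h
    · exact h
    · exfalso
      have hc1 : c = 1 := by linarith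
      rw [← h, hc1] at hx'eq
      simp at hx'eq
      exact hx'x hx'eq.symm
  set u : ℝ := a * s + b with hu
  have hu0 : 0 < u := by
    rcases hb.lt_or_eq with h | h
    · nlinarith [mul_nonneg ha hs]
    · nlinarith
  have hu1 : u ≤ 1 := by nlinarith [mul_nonneg ha hc]
  set p : EuclideanSpace ℝ (Fin 2) := (a * s / u) • v + (b / u) • w with hp
  have hpball : p ∈ Metric.ball y l := by
    apply (convex_ball y l) (Metric.mem_ball.2 hv) (Metric.mem_ball.2 hw)
      (div_nonneg (mul_nonneg ha hs) hu0.le) (div_nonneg hb hu0.le)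
    field_simp
    exact hu.symm
  have hup : u • p = (a * s) • v + b • w := by
    simp only [hp, smul_add, smul_smul, mul_div_cancel₀ _ hu0.ne']
  have h1u : 1 - u = a * c := by nlinarith
  have hzeq : (1 - u) • x + u • p = z := by
    rw [hup, h1u, ← hz, ← hx'eq]
    module
  have hzx : z ≠ x := by
    intro h
    have hpx : u • p = u • x := by
      have hx1 : (1 - u) • x + u • p = x := by rw [hzeq, h]
      have h2 : ((1 - u) • x + u • p) - (1 - u) • x = x - (1 - u) • x := by rw [hx1]
      calc u • p = ((1 - u) • x + u • p) - (1 - u) • x := by module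
        _ = x - (1 - u) • x := h2
        _ = u • x := by module
    have hpx' : p = x := smul_right_injective _ hu0.ne' hpx
    have := Metric.mem_ball.1 hpball
    rw [hpx'] at this
    linarith
  exact ⟨hzx, p, Metric.mem_ball.1 hpball, 1 - u, u, by linarith, hu0.le, by ring, hzeq⟩
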